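/- Let N ≥ 2 be an integer, x : ℤ/Nℤ → ℂ a function, and let 0 ≤ m,k ≤ N−1 be row and column indices; put d = gcd(k,N) (so d = N when k = 0) and N_d = N/d. If d does not divide m, then the (m,k)-entry of the matrix F_N·X_N is 0. If m = du and k = dv (so that gcd(v, N_d) = 1), then the (m,k)-entry of F_N·X_N equals d·x̂_d(t), where t ∈ ℤ/N_dℤ is the unique residue with v·t ≡ u (mod N_d). -/

import Mathlib

open Finset

private lemma exp_nat_two_pi_mul_I (q : ℕ) :
    Complex.exp (q * (2 * Real.pi * Complex.I)) = 1 := by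
  simpa using Complex.exp_int_mul_two_pi_mul_I (q : ℤ)

private lemma exp_mod (n : ℕ) (hn : n ≠ 0) (a : ℕ) :
    Complex.exp (2 * Real.pi * Complex.I * a / n) =
      Complex.exp (2 * Real.pi * Complex.I * ((a % n : ℕ) : ℂ) / n) := by
  have hn' : (n : ℂ) ≠ 0 := Nat.cast_ne_zero.mpr hn
  conv_lhs => rw [← Nat.div_add_mod a n]
  have h : (2 * (Real.pi : ℂ) * Complex.I * ((n * (a / n) + a % n : ℕ) : ℂ) / n)
      = ((a / n : ℕ) : ℂ) * (2 * Real.pi * Complex.I)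
        + 2 * Real.pi * Complex.I * ((a % n : ℕ) : ℂ) / n := by
    push_cast
    field_simp
  rw [h, Complex.exp_add, exp_nat_two_pi_mul_I, one_mul]

private lemma exp_congr_mod (n : ℕ) (hn : n ≠ 0) {a b : ℕ} (h : a % n = b % n) :
    Complex.exp (2 * Real.pi * Complex.I * a / n) =
      Complex.exp (2 * Real.pi * Complex.I * b / n) := by
  rw [exp_mod n hn a, exp_mod n hn b, h]

private lemma sum_exp_eq (d : ℕ) (hd : d ≠ 0) (m : ℕ) :
    ∑ q ∈ Finset.range d, Complex.exp (2 * Real.pi * Complex.I * m * q / d) =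
      if d ∣ m then (d : ℂ) else 0 := by
  have hd' : (d : ℂ) ≠ 0 := Nat.cast_ne_zero.mpr hd
  have hπ : (2 * (Real.pi : ℂ) * Complex.I) ≠ 0 := by
    simp [Real.pi_ne_zero, Complex.I_ne_zero]
  have hterm : ∀ q : ℕ, Complex.exp (2 * Real.pi * Complex.I * m * q / d)
      = Complex.exp (2 * Real.pi * Complex.I * m / d) ^ q := by
    intro q
    rw [← Complex.exp_nat_mul]
    congr 1
    ring
  simp only [hterm]
  by_cases h : d ∣ m
  · obtain ⟨c, rfl⟩ := h
    have h1 : Complex.exp (2 * Real.pi * Complex.I * ((d * c : ℕ) : ℂ) / d) = 1 := by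
      rw [show 2 * (Real.pi : ℂ) * Complex.I * ((d * c : ℕ) : ℂ) / d
          = (c : ℂ) * (2 * Real.pi * Complex.I) by push_cast; field_simp]
      exact exp_nat_two_pi_mul_I c
    rw [if_pos ⟨c, rfl⟩]
    simp only [h1, one_pow, Finset.sum_const, Finset.card_range, nsmul_eq_mul, mul_one]
  · rw [if_neg h]
    have hz : Complex.exp (2 * Real.pi * Complex.I * m / d) ≠ 1 := by
      intro hone
      rw [Complex.exp_eq_one_iff] at hone
      obtain ⟨n, hn⟩ := hone
      apply h
      have h2 : (m : ℂ) * (2 * Real.pi * Complex.I) = ((n * d : ℤ) : ℂ) * (2 * Real.pi * Complex.I) := by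
        have h5 := congrArg (· * (d : ℂ)) hn
        field_simp at h5
        push_cast
        linear_combination (2 * (Real.pi : ℂ) * Complex.I) * h5
      have h3 : (m : ℤ) = n * d := by
        have := mul_right_cancel₀ hπ h2
        exact_mod_cast this
      have h4 : (d : ℤ) ∣ (m : ℤ) := ⟨n, by linarith⟩
      exact_mod_cast h4
    rw [geom_sum_eq hz]
    have hpow : Complex.exp (2 * Real.pi * Complex.I * m / d) ^ d = 1 := by
      rw [← Complex.exp_nat_mul,
        show (d : ℂ) * (2 * Real.pi * Complex.I * m / d) = (m : ℂ) * (2 * Real.pi * Complex.I) by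
          field_simp]
      exact exp_nat_two_pi_mul_I m
    rw [hpow, sub_self, zero_div]

private lemma sum_range_zmod (n : ℕ) [NeZero n] (f : ℕ → ℂ) :
    ∑ r ∈ Finset.range n, f r = ∑ z : ZMod n, f (ZMod.val z) := by
  refine Finset.sum_nbij' (fun r => (r : ZMod n)) (fun z => z.val)
    (fun a _ => Finset.mem_univ _)
    (fun z _ => Finset.mem_range.mpr (ZMod.val_lt z))
    (fun a ha => ZMod.val_cast_of_lt (Finset.mem_range.mp ha))
    (fun z _ => ZMod.natCast_rightInverse z)
    (fun a ha => by rw [ZMod.val_cast_of_lt (Finset.mem_range.mp ha)])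

private lemma sum_range_mul_split (d n : ℕ) (f : ℕ → ℂ) :
    ∑ j ∈ Finset.range (d * n), f j =
      ∑ q ∈ Finset.range d, ∑ r ∈ Finset.range n, f (q * n + r) := by
  rcases Nat.eq_zero_or_pos n with rfl | hn
  · simp
  rw [← Finset.sum_product']
  refine Finset.sum_nbij' (fun j => ((j / n, j % n) : ℕ × ℕ))
    (fun p : ℕ × ℕ => p.1 * n + p.2) ?_ ?_ ?_ ?_ ?_
  · intro j hj
    simp only [Finset.mem_range] at hj
    simp only [Finset.mem_product, Finset.mem_range]
    exact ⟨Nat.div_lt_of_lt_mul (by rwa [mul_comm] at hj), Nat.mod_lt _ hn⟩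
  · intro p hp
    simp only [Finset.mem_product, Finset.mem_range] at hp
    exact Finset.mem_range.mpr (calc p.1 * n + p.2 < p.1 * n + n := by omega
      _ = (p.1 + 1) * n := by ring
      _ ≤ d * n := Nat.mul_le_mul_right n (by omega))
  · intro j _
    simp only
    rw [mul_comm (j / n) n, Nat.div_add_mod]
  · intro p hp
    simp only [Finset.mem_product, Finset.mem_range] at hp
    have h1 : (p.1 * n + p.2) / n = p.1 := by
      rw [add_comm, Nat.add_mul_div_right _ _ hn, Nat.div_eq_of_lt hp.2, zero_add]
    have h2 : (p.1 * n + p.2) % n = p.2 := by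
      rw [add_comm, Nat.add_mul_mod_self_right, Nat.mod_eq_of_lt hp.2]
    simp [h1, h2]
  · intro j _
    simp only
    conv_rhs => rw [mul_comm (j / n) n, Nat.div_add_mod]


/-- The Fourier matrix `F_N` with `(m,n)` entry `exp(2πi·mn/N)`, `0 ≤ m,n ≤ N−1`. -/
noncomputable def fourierMatrix (N : ℕ) : Matrix (Fin N) (Fin N) ℂ :=
  Matrix.of fun m n => Complex.exp (2 * Real.pi * Complex.I * (m : ℕ) * (n : ℕ) / N)

/-- The semigroup matrix `X_N` of the multiplicative monoid `ℤ/Nℤ` attached to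
`x : ℤ/Nℤ → ℂ`: its `(i,j)` entry is `x(ij mod N)`, `0 ≤ i,j ≤ N−1`. -/
def XMat (N : ℕ) (x : ZMod N → ℂ) : Matrix (Fin N) (Fin N) ℂ :=
  Matrix.of fun i j => x (((i : ℕ) : ZMod N) * ((j : ℕ) : ZMod N))

/-- For a divisor `d` of `N` and `t ∈ ℤ/N_dℤ` (`N_d = N/d`),
`x̂_d(t) = Σ_{r=0}^{N_d−1} x(dr mod N)·exp(2πi·tr/N_d)`. -/
noncomputable def xhat (N d : ℕ) (x : ZMod N → ℂ) (t : ZMod (N / d)) : ℂ :=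
  ∑ r ∈ Finset.range (N / d),
    x (((d * r : ℕ) : ZMod N)) *
      Complex.exp (2 * Real.pi * Complex.I * (ZMod.val t) * r / ((N / d : ℕ) : ℂ))

/-- Entry structure of `F_N·X_N`: with `d = gcd(k,N)`, the `(m,k)` entry vanishes
unless `d ∣ m`, and if `m = du`, `k = dv` then it equals `d·x̂_d(t)` where `t` is the
unique residue mod `N_d = N/d` with `v·t ≡ u (mod N_d)`. -/
theorem fourierMatrix_mul_XMat_apply (N : ℕ) (hN : 2 ≤ N) (x : ZMod N → ℂ)
    (m k : Fin N) :
    (¬ (Nat.gcd (k : ℕ) N ∣ (m : ℕ)) → (fourierMatrix N * XMat N x) m k = 0) ∧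
    (∀ u v : ℕ, (m : ℕ) = Nat.gcd (k : ℕ) N * u → (k : ℕ) = Nat.gcd (k : ℕ) N * v →
      ∀ t : ZMod (N / Nat.gcd (k : ℕ) N),
        (v : ZMod (N / Nat.gcd (k : ℕ) N)) * t = (u : ZMod (N / Nat.gcd (k : ℕ) N)) →
        (fourierMatrix N * XMat N x) m k =
          (Nat.gcd (k : ℕ) N : ℂ) * xhat N (Nat.gcd (k : ℕ) N) x t) := by
  have hNpos : 0 < N := by omega
  set d := Nat.gcd (k : ℕ) N with hddef
  have hdpos : 0 < d := Nat.gcd_pos_of_pos_right _ hNpos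
  have hdvdN : d ∣ N := Nat.gcd_dvd_right _ _
  have hdvdk : d ∣ (k : ℕ) := Nat.gcd_dvd_left _ _
  set Nd := N / d with hNddef
  have hNmul : d * Nd = N := Nat.mul_div_cancel' hdvdN
  have hNdpos : 0 < Nd := Nat.div_pos (Nat.le_of_dvd hNpos hdvdN) hdpos
  haveI : NeZero Nd := ⟨hNdpos.ne'⟩
  have hNC : (N : ℂ) ≠ 0 := Nat.cast_ne_zero.mpr hNpos.ne'
  have hdC : (d : ℂ) ≠ 0 := Nat.cast_ne_zero.mpr hdpos.ne'
  have hNdC : (Nd : ℂ) ≠ 0 := Nat.cast_ne_zero.mpr hNdpos.ne'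
  have hNCmul : (N : ℂ) = (d : ℂ) * Nd := by rw [← hNmul]; push_cast; ring
  -- The entry as a product of two sums
  have hentry : (fourierMatrix N * XMat N x) m k =
      (∑ q ∈ Finset.range d, Complex.exp (2 * Real.pi * Complex.I * (m : ℕ) * q / d)) *
      ∑ r ∈ Finset.range Nd, Complex.exp (2 * Real.pi * Complex.I * (m : ℕ) * r / N)
        * x ((r * (k : ℕ) : ℕ) : ZMod N) := by
    rw [Matrix.mul_apply]
    have h1 : ∑ j : Fin N, fourierMatrix N m j * XMat N x j k =
        ∑ j ∈ Finset.range N, Complex.exp (2 * Real.pi * Complex.I * (m : ℕ) * j / N)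
          * x ((j * (k : ℕ) : ℕ) : ZMod N) := by
      rw [← Fin.sum_univ_eq_sum_range (fun j : ℕ =>
        Complex.exp (2 * Real.pi * Complex.I * (m : ℕ) * j / N)
          * x ((j * (k : ℕ) : ℕ) : ZMod N)) N]
      refine Finset.sum_congr rfl fun j _ => ?_
      simp only [fourierMatrix, XMat, Matrix.of_apply, Nat.cast_mul]
    rw [h1, show Finset.range N = Finset.range (d * Nd) by rw [hNmul],
      sum_range_mul_split, Finset.sum_mul_sum]
    refine Finset.sum_congr rfl fun q hq => Finset.sum_congr rfl fun r hr => ?_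
    obtain ⟨c, hc⟩ := hdvdk
    have hsp : (q * Nd + r) * (k : ℕ) = (d * Nd) * (q * c) + r * (k : ℕ) := by
      rw [hc]; ring
    have hNz : ((d * Nd : ℕ) : ZMod N) = 0 := by rw [hNmul]; exact ZMod.natCast_self N
    have hx : (((q * Nd + r) * (k : ℕ) : ℕ) : ZMod N) = ((r * (k : ℕ) : ℕ) : ZMod N) := by
      rw [hsp]
      have heq : (((d * Nd) * (q * c) + r * (k : ℕ) : ℕ) : ZMod N)
          = ((d * Nd : ℕ) : ZMod N) * ((q * c : ℕ) : ZMod N)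
            + ((r * (k : ℕ) : ℕ) : ZMod N) := by push_cast; ring
      rw [heq, hNz, zero_mul, zero_add]
    have hexp : Complex.exp (2 * Real.pi * Complex.I * (m : ℕ) * ((q * Nd + r : ℕ) : ℂ) / N)
        = Complex.exp (2 * Real.pi * Complex.I * (m : ℕ) * q / d)
          * Complex.exp (2 * Real.pi * Complex.I * (m : ℕ) * r / N) := by
      rw [← Complex.exp_add]
      congr 1
      rw [hNCmul]
      push_cast
      field_simp
    rw [hx, hexp]
    ring
  constructor
  · intro h
    rw [hentry, sum_exp_eq d hdpos.ne' (m : ℕ), if_neg h, zero_mul]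
  · intro u v hm hk t ht
    rw [hentry, sum_exp_eq d hdpos.ne' (m : ℕ), if_pos ⟨u, hm⟩]
    congr 1
    -- second sum equals xhat
    have hcop : Nat.Coprime v Nd := by
      have hg : d * Nat.gcd v Nd = d * 1 := by
        rw [mul_one, ← Nat.gcd_mul_left d v Nd, ← hk, hNmul]
      exact Nat.eq_of_mul_eq_mul_left hdpos hg
    have hbij : Function.Bijective (fun z : ZMod Nd => (v : ZMod Nd) * z) := by
      simpa [ZMod.coe_unitOfCoprime] using
        Units.mulLeft_bijective (ZMod.unitOfCoprime v hcop)
    rw [sum_range_zmod Nd (fun r => Complex.exp (2 * Real.pi * Complex.I * (m : ℕ) * r / N)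
        * x ((r * (k : ℕ) : ℕ) : ZMod N))]
    have hxhat : xhat N d x t = ∑ z : ZMod Nd,
        x ((d * (ZMod.val z) : ℕ) : ZMod N)
          * Complex.exp (2 * Real.pi * Complex.I * (ZMod.val t) * (ZMod.val z) / Nd) := by
      exact sum_range_zmod Nd (fun s => x ((d * s : ℕ) : ZMod N)
        * Complex.exp (2 * Real.pi * Complex.I * (ZMod.val t) * s / Nd))
    rw [hxhat]
    refine Fintype.sum_bijective _ hbij _ _ fun z => ?_
    set s := ((v : ZMod Nd) * z).val with hsdef
    have hmod : (v * z.val) % Nd = s % Nd := by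
      have h1 : ((v * z.val : ℕ) : ZMod Nd) = ((s : ℕ) : ZMod Nd) := by
        push_cast
        simp [hsdef, ZMod.natCast_val, ZMod.cast_id]
      exact (ZMod.natCast_eq_natCast_iff' _ _ _).mp h1
    have hxeq : ((z.val * (k : ℕ) : ℕ) : ZMod N) = ((d * s : ℕ) : ZMod N) := by
      rw [ZMod.natCast_eq_natCast_iff]
      have h5 : d * (v * z.val) ≡ d * s [MOD N] := by
        rw [← hNmul]; exact Nat.ModEq.mul_left' d hmod
      calc z.val * (k : ℕ) = d * (v * z.val) := by rw [hk]; ring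
        _ ≡ d * s [MOD N] := h5
    have hexpeq : Complex.exp (2 * Real.pi * Complex.I * (m : ℕ) * z.val / N)
        = Complex.exp (2 * Real.pi * Complex.I * (ZMod.val t) * s / (Nd : ℂ)) := by
      have e1 : (2 * Real.pi * Complex.I * (m : ℕ) * z.val / N : ℂ)
          = 2 * Real.pi * Complex.I * ((u * z.val : ℕ) : ℂ) / Nd := by
        rw [hm, hNCmul]; push_cast; field_simp
      have e2 : (2 * Real.pi * Complex.I * (ZMod.val t) * s / (Nd : ℂ))
          = 2 * Real.pi * Complex.I * ((ZMod.val t * s : ℕ) : ℂ) / Nd := by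
        push_cast; ring
      rw [e1, e2]
      apply exp_congr_mod Nd hNdpos.ne'
      apply (ZMod.natCast_eq_natCast_iff' _ _ _).mp
      push_cast
      simp only [ZMod.natCast_val, ZMod.cast_id]
      rw [hsdef, ZMod.natCast_val, ZMod.cast_id, ← ht]
      ring
    rw [hxeq, hexpeq]
    ring
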